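/- Let q be an odd prime with q ≡ 3 (mod 4), r an odd prime with r mod 2q ∈ D_0^{(2q)}, n = ord_{2q}(r), and η a primitive 2q-th root of unity in 𝔽_{r^n}. Then for each i ∈ {0,1} the reciprocal polynomial of g_{D_i}^{(2q)} satisfies g̃_{D_i}^{(2q)}(x) = g_{D_{(i+1) mod 2}}^{(2q)}(x), where for a polynomial h of degree k with h(0) ≠ 0 its reciprocal is h̃(x) = h(0)^{−1} x^k h(x^{−1}). -/

import Mathlib

open Polynomial

/-- The cyclotomic class `D_i^{(2q)} = {g^(2s+i) mod 2q : 0 ≤ s < (q-1)/2}`. -/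
def Dcl (q g i : ℕ) : Finset ℕ :=
  (Finset.range ((q - 1) / 2)).image fun s => g ^ (2 * s + i) % (2 * q)

/-- The cyclotomic class `E_i^{(2q)} = {2u mod 2q : u ∈ D_i^{(2q)}}`. -/
def Ecl (q g i : ℕ) : Finset ℕ :=
  (Dcl q g i).image fun u => 2 * u % (2 * q)

/-- The `r`-cyclotomic coset modulo `2q` containing `t`: `{t·r^i mod 2q : i ∈ ℕ}`. -/
def Ccoset (q r t : ℕ) : Set ℕ := {x | ∃ i : ℕ, x = t * r ^ i % (2 * q)}

/-- `g_{D_i}^{(2q)}(x) = ∏_{j ∈ D_i^{(2q)}} (x - η^j)`. -/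
noncomputable def gDpoly (F : Type) [Field F] (q g i : ℕ) (η : F) : F[X] :=
  ∏ j ∈ Dcl q g i, (X - C (η ^ j))

/-- `g_{E_i}^{(2q)}(x) = ∏_{j ∈ E_i^{(2q)}} (x - η^j)`. -/
noncomputable def gEpoly (F : Type) [Field F] (q g i : ℕ) (η : F) : F[X] :=
  ∏ j ∈ Ecl q g i, (X - C (η ^ j))

/-- `M_t(x) = ∏_{j ∈ C_{(t,2q)}} (x - η^j)`, the minimal polynomial of `η^t`. -/
noncomputable def Mpoly (F : Type) [Field F] (q r t : ℕ) (η : F) : F[X] :=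
  ∏ᶠ j ∈ Ccoset q r t, (X - C (η ^ j))

/-- The reciprocal polynomial `h̃(x) = h(0)⁻¹ x^{deg h} h(x⁻¹)`. -/
noncomputable def recip (F : Type) [Field F] (h : F[X]) : F[X] :=
  C (h.coeff 0)⁻¹ * h.reverse

/-! ### Auxiliary lemmas -/

lemma recip_mul (F : Type) [Field F] (p q : F[X]) :
    recip F (p * q) = recip F p * recip F q := by
  unfold recip
  rw [reverse_mul_of_domain, mul_coeff_zero, mul_inv, C_mul]
  ring

lemma recip_lin (F : Type) [Field F] (a : F) (ha : a ≠ 0) :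
    recip F (X - C a) = X - C a⁻¹ := by
  unfold recip
  have h0 : (X - C a).coeff 0 = -a := by simp
  have hrev : (X - C a).reverse = 1 - C a * X := by
    rw [reverse, natDegree_X_sub_C, reflect_sub, reflect_C, ← pow_one (X : F[X]),
      reflect_monomial]
    simp [revAt_le]
  rw [h0, hrev, inv_neg, map_neg, neg_mul]
  have h1 : C a⁻¹ * C a = (1 : F[X]) := by rw [← C_mul, inv_mul_cancel₀ ha, C_1]
  linear_combination (X : F[X]) * h1

lemma recip_one (F : Type) [Field F] : recip F 1 = 1 := by
  unfold recip
  simp [reverse, reflect_C]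

lemma recip_prod (F : Type) [Field F] (S : Finset ℕ) (f : ℕ → F)
    (hf : ∀ j ∈ S, f j ≠ 0) :
    recip F (∏ j ∈ S, (X - C (f j))) = ∏ j ∈ S, (X - C (f j)⁻¹) := by
  induction S using Finset.cons_induction with
  | empty => simpa using recip_one F
  | cons a s ha ih =>
    rw [Finset.prod_cons, Finset.prod_cons, recip_mul,
      recip_lin F _ (hf a (Finset.mem_cons_self a s)),
      ih (fun j hj => hf j (Finset.mem_cons_of_mem hj))]

open Subgroup in
lemma neg_one_eq_pow (q g : ℕ) (hq : q.Prime) (hodd : Odd q)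
    (hg2q : orderOf ((g : ℕ) : ZMod (2 * q)) = q - 1) :
    ((g : ℕ) : ZMod (2 * q)) ^ ((q - 1) / 2) = -1 := by
  have hq3 : 3 ≤ q := by
    have := hq.two_le
    rcases Nat.odd_iff.mp hodd with h
    omega
  haveI : NeZero (2 * q) := ⟨by omega⟩
  set G : ZMod (2 * q) := ((g : ℕ) : ZMod (2 * q)) with hG
  have hu : IsUnit G := by
    refine IsUnit.of_pow_eq_one (n := q - 1) ?_ (by omega)
    rw [← hg2q]; exact pow_orderOf_eq_one G
  set u := hu.unit with huu
  have hval : (u : ZMod (2 * q)) = G := hu.unit_spec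
  have hord_u : orderOf u = q - 1 := by
    rw [← hg2q, ← hval, orderOf_units]
  have hcardu : Nat.card (ZMod (2 * q))ˣ = q - 1 := by
    rw [Nat.card_eq_fintype_card, ZMod.card_units_eq_totient,
      Nat.totient_mul (Nat.coprime_two_left.mpr hodd), Nat.totient_two,
      Nat.totient_prime hq, one_mul]
  have htop : zpowers u = ⊤ := by
    apply Subgroup.eq_top_of_card_eq
    rw [Nat.card_zpowers, hord_u, hcardu]
  have hmem : (-1 : (ZMod (2 * q))ˣ) ∈ Submonoid.powers u := by
    have h1 : (-1 : (ZMod (2 * q))ˣ) ∈ zpowers u := htop ▸ Subgroup.mem_top _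
    exact ((isOfFinOrder_of_finite _).mem_powers_iff_mem_zpowers).mpr h1
  obtain ⟨k, hk⟩ := hmem
  simp only at hk
  set k' := k % (q - 1) with hk'def
  have hk' : u ^ k' = -1 := by
    rw [hk'def, ← hord_u, pow_mod_orderOf]; exact hk
  have hk'lt : k' < q - 1 := Nat.mod_lt _ (by omega)
  have h2k : u ^ (k' * 2) = 1 := by
    rw [pow_mul, hk', neg_one_sq]
  have hdvd : (q - 1) ∣ k' * 2 := by
    rw [← hord_u]; exact orderOf_dvd_of_pow_eq_one h2k
  obtain ⟨c, hc⟩ := hdvd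
  have hc2 : c < 2 := by
    by_contra h
    push_neg at h
    have : (q - 1) * 2 ≤ (q - 1) * c := Nat.mul_le_mul_left _ h
    omega
  have hne : (1 : (ZMod (2 * q))ˣ) ≠ -1 := by
    intro h
    have h' := congrArg Units.val h
    simp only [Units.val_one, Units.val_neg] at h'
    have h2 : ((2 : ℕ) : ZMod (2 * q)) = 0 := by push_cast; linear_combination h'
    rw [ZMod.natCast_eq_zero_iff] at h2
    have := Nat.le_of_dvd (by norm_num) h2
    omega
  rcases c with _ | c
  · exfalso
    rw [Nat.mul_zero] at hc
    have hz : k' = 0 := by simpa using hc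
    rw [hz, pow_zero] at hk'
    exact hne hk'
  · have hc0 : c = 0 := by omega
    subst hc0
    have hk'eq : k' = (q - 1) / 2 := by omega
    have := hk'
    rw [hk'eq] at this
    calc G ^ ((q - 1) / 2) = ((u ^ ((q - 1) / 2) : (ZMod (2 * q))ˣ) : ZMod (2 * q)) := by
          rw [Units.val_pow_eq_pow_val, hval]
      _ = -1 := by rw [this, Units.val_neg, Units.val_one]

lemma Dcl_neg_mem (q g : ℕ) (hq : q.Prime) (hodd : Odd q)
    (hg2q : orderOf ((g : ℕ) : ZMod (2 * q)) = q - 1)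
    (hq4 : q % 4 = 3)
    (hneg1 : ((g : ℕ) : ZMod (2 * q)) ^ ((q - 1) / 2) = -1)
    (i : ℕ) (hi : i ≤ 1) :
    ∀ j ∈ Dcl q g i, 0 < j ∧ j < 2 * q ∧ (2 * q - j) ∈ Dcl q g (1 - i) := by
  have hq3 : 3 ≤ q := by
    have := hq.two_le
    have := Nat.odd_iff.mp hodd
    omega
  haveI : NeZero (2 * q) := ⟨by omega⟩
  haveI : Nontrivial (ZMod (2 * q)) := by
    haveI : Fact (1 < 2 * q) := ⟨by omega⟩
    infer_instance
  set G : ZMod (2 * q) := ((g : ℕ) : ZMod (2 * q)) with hG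
  have hu : IsUnit G := by
    refine IsUnit.of_pow_eq_one (n := q - 1) ?_ (by omega)
    rw [← hg2q]; exact pow_orderOf_eq_one G
  intro j hj
  simp only [Dcl, Finset.mem_image, Finset.mem_range] at hj ⊢
  obtain ⟨s, hs, rfl⟩ := hj
  have hval : ∀ e : ℕ, (G ^ e).val = g ^ e % (2 * q) := by
    intro e
    rw [hG, ← Nat.cast_pow, ZMod.val_natCast]
  have hlt : g ^ (2 * s + i) % (2 * q) < 2 * q := Nat.mod_lt _ (by omega)
  have hne0 : G ^ (2 * s + i) ≠ 0 := (hu.pow _).ne_zero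
  have hpos : 0 < g ^ (2 * s + i) % (2 * q) := by
    rcases Nat.eq_zero_or_pos (g ^ (2 * s + i) % (2 * q)) with h | h
    swap
    · exact h
    · exfalso
      apply hne0
      rw [← ZMod.val_eq_zero, hval, h]
  refine ⟨hpos, hlt, ?_⟩
  have hnegval : (-(G ^ (2 * s + i))).val = 2 * q - g ^ (2 * s + i) % (2 * q) := by
    rw [ZMod.neg_val, if_neg hne0, hval]
  have hneg : -(G ^ (2 * s + i)) = G ^ (2 * s + i + (q - 1) / 2) := by
    have : G ^ (2 * s + i + (q - 1) / 2) = G ^ (2 * s + i) * G ^ ((q - 1) / 2) :=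
      pow_add G (2 * s + i) ((q - 1) / 2)
    rw [this, hneg1, mul_neg_one]
  set e' := (2 * s + i + (q - 1) / 2) % (q - 1) with he'def
  have hGe : G ^ (2 * s + i + (q - 1) / 2) = G ^ e' := by
    have := pow_mod_orderOf G (2 * s + i + (q - 1) / 2)
    rw [hg2q] at this
    exact this.symm
  have he'form : (e' = 2 * s + i + (q - 1) / 2 ∧ 2 * s + i + (q - 1) / 2 < q - 1) ∨
      (e' = 2 * s + i + (q - 1) / 2 - (q - 1) ∧ q - 1 ≤ 2 * s + i + (q - 1) / 2) := by
    rcases Nat.lt_or_ge (2 * s + i + (q - 1) / 2) (q - 1) with h | h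
    · left; exact ⟨by rw [he'def, Nat.mod_eq_of_lt h], h⟩
    · right
      exact ⟨by rw [he'def, Nat.mod_eq_sub_mod h, Nat.mod_eq_of_lt (by omega)], h⟩
  have hkey : ∃ s', s' < (q - 1) / 2 ∧ 2 * s' + (1 - i) = e' := by
    rcases he'form with ⟨h1, h2⟩ | ⟨h1, h2⟩
    · exact ⟨(e' - (1 - i)) / 2, by omega, by omega⟩
    · exact ⟨(e' - (1 - i)) / 2, by omega, by omega⟩
  obtain ⟨s', hs', he's⟩ := hkey
  refine ⟨s', hs', ?_⟩
  rw [he's]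
  have : g ^ e' % (2 * q) = (G ^ e').val := (hval e').symm
  rw [this, ← hGe, ← hneg, hnegval]

lemma recip_gD (q g : ℕ) (hq : q.Prime) (hodd : Odd q)
    (hg2q : orderOf ((g : ℕ) : ZMod (2 * q)) = q - 1) (hq4 : q % 4 = 3)
    (F : Type) [Field F] (η : F) (hη : IsPrimitiveRoot η (2 * q))
    (i : ℕ) (hi : i ≤ 1) :
    recip F (gDpoly F q g i η) = gDpoly F q g (1 - i) η := by
  have hq3 : 3 ≤ q := by
    have := hq.two_le
    have := Nat.odd_iff.mp hodd
    omega
  have hη1 : η ^ (2 * q) = 1 := hη.pow_eq_one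
  have hη0 : η ≠ 0 := by
    intro h
    rw [h, zero_pow (by omega : 2 * q ≠ 0)] at hη1
    exact zero_ne_one hη1
  have hneg1 := neg_one_eq_pow q g hq hodd hg2q
  have hmem := Dcl_neg_mem q g hq hodd hg2q hq4 hneg1
  rw [gDpoly, gDpoly, recip_prod F _ _ (fun j _ => pow_ne_zero _ hη0)]
  refine Finset.prod_nbij' (i := fun j => 2 * q - j) (j := fun j => 2 * q - j)
    (fun j hj => (hmem i hi j hj).2.2)
    (fun j hj => ?_) (fun j hj => ?_) (fun j hj => ?_) (fun j hj => ?_)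
  · have h := (hmem (1 - i) (by omega) j hj).2.2
    rwa [show 1 - (1 - i) = i by omega] at h
  · have h := hmem i hi j hj
    show 2 * q - (2 * q - j) = j
    omega
  · have h := hmem (1 - i) (by omega) j hj
    show 2 * q - (2 * q - j) = j
    omega
  · obtain ⟨h1, h2, _⟩ := hmem i hi j hj
    have hmul : η ^ j * η ^ (2 * q - j) = 1 := by
      rw [← pow_add, show j + (2 * q - j) = 2 * q by omega]
      exact hη1
    rw [inv_eq_of_mul_eq_one_right hmul]

theorem stmt8 (q g : ℕ) (hq : q.Prime) (hodd : Odd q)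
    (hgq : orderOf ((g : ℕ) : ZMod q) = q - 1)
    (hg2q : orderOf ((g : ℕ) : ZMod (2 * q)) = q - 1)
    (hq4 : q % 4 = 3)
    (r : ℕ) (hr : r.Prime) (hrodd : Odd r)
    (hrD : r % (2 * q) ∈ Dcl q g 0)
    (F : Type) [Field F] [Fintype F] [CharP F r]
    (hcard : Fintype.card F = r ^ orderOf ((r : ℕ) : ZMod (2 * q)))
    (η : F) (hη : IsPrimitiveRoot η (2 * q))
    (i : ℕ) (hi : i ∈ ({0, 1} : Set ℕ)) :
    recip F (gDpoly F q g i η) = gDpoly F q g ((i + 1) % 2) η := by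
  rcases hi with rfl | hi
  · simpa using recip_gD q g hq hodd hg2q hq4 F η hη 0 (by norm_num)
  · rw [Set.mem_singleton_iff] at hi
    subst hi
    simpa using recip_gD q g hq hodd hg2q hq4 F η hη 1 le_rfl
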